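/- For all natural numbers m, n, k, one has C(m+1, n, k+1) = C(m, n, k) + C(m, n, k+1) (the Pascal-type recurrence in the parameter m). -/
import Mathlib

open Finset

/-- The set of ternary words of length `m + n` (as functions `Fin (m+n) → Fin 3`)
having exactly `k` letters equal to `2` and no letter equal to `0` among the
first `m` letters. -/
def ternaryWords (m n k : ℕ) : Finset (Fin (m + n) → Fin 3) :=
  univ.filter fun w =>
    (univ.filter fun i => w i = 2).card = k ∧ ∀ i : Fin (m + n), (i : ℕ) < m → w i ≠ 0

/-- `C m n k` is the number of ternary words of length `m + n` with exactly `k`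
twos and no zero among the first `m` letters; it equals the inset number
`{m,n choose k}` of Janjić–Petković. -/
def C (m n k : ℕ) : ℕ := (ternaryWords m n k).card

theorem stmt_10 (m n k : ℕ) :
    C (m + 1) n (k + 1) = C m n k + C m n (k + 1) := by
  classical
  have h : m + 1 + n = (m + n) + 1 := by omega
  let E : (Fin (m+1+n) → Fin 3) ≃ (Fin 3 × (Fin (m+n) → Fin 3)) :=
    (Equiv.arrowCongr (finCongr h) (Equiv.refl _)).trans (Fin.consEquiv fun _ => Fin 3).symm
  have hsymm : ∀ a v, E.symm (a, v) = fun j => Fin.cons (α := fun _ => Fin 3) a v (finCongr h j) := by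
    intro a v; funext j; rfl
  -- membership characterization
  have hmem : ∀ (a : Fin 3) (v : Fin (m+n) → Fin 3) (k' : ℕ),
      E.symm (a, v) ∈ ternaryWords (m+1) n k' ↔
      ((if a = 2 then 1 else 0) + (univ.filter fun i => v i = 2).card = k'
        ∧ a ≠ 0 ∧ ∀ i : Fin (m+n), (i : ℕ) < m → v i ≠ 0) := by
    intro a v k'
    rw [hsymm]
    simp only [ternaryWords, mem_filter, mem_univ, true_and]
    have hc : (univ.filter fun j : Fin (m+1+n) => Fin.cons (α := fun _ => Fin 3) a v (finCongr h j) = 2).card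
        = (if a = 2 then 1 else 0) + (univ.filter fun i => v i = 2).card := by
      rw [Finset.card_filter, Finset.card_filter]
      rw [Fintype.sum_equiv (finCongr h)
        (fun j => if Fin.cons (α := fun _ => Fin 3) a v (finCongr h j) = (2:Fin 3) then 1 else 0)
        (fun j => if Fin.cons (α := fun _ => Fin 3) a v j = (2:Fin 3) then 1 else 0) (fun j => rfl)]
      rw [Fin.sum_univ_succ]
      simp [Fin.cons_succ]
    have hz : (∀ j : Fin (m+1+n), (j:ℕ) < m+1 → Fin.cons (α := fun _ => Fin 3) a v (finCongr h j) ≠ 0)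
        ↔ (a ≠ 0 ∧ ∀ i : Fin (m+n), (i : ℕ) < m → v i ≠ 0) := by
      constructor
      · intro H
        constructor
        · have := H ⟨0, by omega⟩ (by simp)
          simpa using this
        · intro i hi
          have := H ⟨(i:ℕ)+1, by omega⟩ (by simp; omega)
          have e2 : finCongr h (⟨(i:ℕ)+1, by omega⟩ : Fin (m+1+n)) = Fin.succ i := by
            ext; simp
          rwa [e2, Fin.cons_succ] at this
      · rintro ⟨ha, hv⟩ j hj
        rcases Fin.eq_zero_or_eq_succ (finCongr h j) with he | ⟨i, he⟩
        · rw [he, Fin.cons_zero]; exact ha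
        · rw [he, Fin.cons_succ]
          apply hv
          have : (j:ℕ) = (i:ℕ) + 1 := by
            have := congrArg Fin.val he
            simpa using this
          omega
    rw [hc, hz]
  -- count via image
  have hC : ∀ k', C (m+1) n k' = ((ternaryWords (m+1) n k').map E.toEmbedding).card := by
    intro k'; rw [Finset.card_map]; rfl
  have himg : (ternaryWords (m+1) n (k+1)).map E.toEmbedding
      = ({(2:Fin 3)} ×ˢ ternaryWords m n k) ∪ ({(1:Fin 3)} ×ˢ ternaryWords m n (k+1)) := by
    ext ⟨a, v⟩
    rw [Finset.mem_map_equiv, hmem]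
    simp only [Finset.mem_union, Finset.mem_product, Finset.mem_singleton]
    constructor
    · rintro ⟨hcard, ha, hv⟩
      have ha12 : a = 1 ∨ a = 2 := by
        have := a.isLt
        rcases Fin.eq_zero_or_eq_succ a with rfl | ⟨b, rfl⟩
        · exact absurd rfl ha
        · omega
      rcases ha12 with rfl | rfl
      · right
        refine ⟨rfl, ?_⟩
        simp only [ternaryWords, mem_filter, mem_univ, true_and]
        rw [if_neg (by decide)] at hcard
        exact ⟨by omega, hv⟩
      · left
        refine ⟨rfl, ?_⟩
        simp only [ternaryWords, mem_filter, mem_univ, true_and]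
        rw [if_pos rfl] at hcard
        exact ⟨by omega, hv⟩
    · rintro (⟨ha, hv⟩ | ⟨ha, hv⟩) <;> subst ha <;>
        simp only [ternaryWords, mem_filter, mem_univ, true_and] at hv
      · exact ⟨by rw [if_pos rfl, hv.1]; omega, by decide, hv.2⟩
      · exact ⟨by rw [if_neg (by decide), hv.1]; omega, by decide, hv.2⟩
  rw [hC, himg, Finset.card_union_of_disjoint, Finset.singleton_product,
    Finset.singleton_product, Finset.card_map, Finset.card_map]
  · rfl
  · simp only [Finset.disjoint_left, Finset.mem_product, Finset.mem_singleton]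
    rintro ⟨a, v⟩ ⟨ha, -⟩ ⟨ha', -⟩
    rw [ha] at ha'
    exact absurd ha' (by decide)
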